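/- arXiv:2511.16538 — 4 statements merged into one kernel-verified Lean document; each statement's English description precedes it below -/
import Mathlib

section
/- Let h(x) = x(x+1)(x+2)(x+3)(2x+3). The function 1/h, extended by taking value 0 at x = ∞ appropriately, is harmonic for the Markov chain with transitions p(x,x±1), p(x,x): for every integer x ≥ 2, p(x,x+1)/h(x+1) + p(x,x)/h(x) + p(x,x-1)/h(x-1) = 1/h(x), where p(x,x+1) = (x+4)(2x+5)/(3(x+2)(2x+3)), p(x,x) = x(x+3)/(3(x+1)(x+2)), p(x,x-1) = (x-1)(2x+1)/(3(x+1)(2x+3)). -/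
def h (x : ℚ) : ℚ := x * (x + 1) * (x + 2) * (x + 3) * (2 * x + 3)
def pUp (x : ℚ) : ℚ := (x + 4) * (2 * x + 5) / (3 * (x + 2) * (2 * x + 3))
def pStay (x : ℚ) : ℚ := x * (x + 3) / (3 * (x + 1) * (x + 2))
def pDown (x : ℚ) : ℚ := (x - 1) * (2 * x + 1) / (3 * (x + 1) * (2 * x + 3))

theorem inv_h_harmonic (x : ℕ) (hx : 2 ≤ x) :
    pUp x / h ((x : ℚ) + 1) + pStay x / h x + pDown x / h ((x : ℚ) - 1)
      = 1 / h x := by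
  have hx' : (2 : ℚ) ≤ (x : ℚ) := by exact_mod_cast hx
  have h0 : (0 : ℚ) < (x : ℚ) := by linarith
  have hd : h ((x : ℚ) - 1) = ((x:ℚ) - 1) * (x:ℚ) * ((x:ℚ) + 1) * ((x:ℚ) + 2) * (2*(x:ℚ) + 1) := by
    simp only [h]; ring
  have hu : h ((x : ℚ) + 1) = ((x:ℚ) + 1) * ((x:ℚ) + 2) * ((x:ℚ) + 3) * ((x:ℚ) + 4) * (2*(x:ℚ) + 5) := by
    simp only [h]; ring
  rw [hd, hu]
  simp only [h, pUp, pStay, pDown]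
  have h1 : (x : ℚ) - 1 ≠ 0 := by linarith
  have h2 : (x : ℚ) ≠ 0 := by linarith
  have h3 : (x : ℚ) + 1 ≠ 0 := by linarith
  have h4 : (x : ℚ) + 2 ≠ 0 := by linarith
  have h5 : (x : ℚ) + 3 ≠ 0 := by linarith
  have h6 : (x : ℚ) + 4 ≠ 0 := by linarith
  have h7 : 2 * (x : ℚ) + 1 ≠ 0 := by linarith
  have h8 : 2 * (x : ℚ) + 3 ≠ 0 := by linarith
  have h9 : 2 * (x : ℚ) + 5 ≠ 0 := by linarith
  field_simp
  ring
end

section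
/- Define A_{x,k} for integers x ≥ k ≥ 0 by A_{k,k} = 0 and A_{x,k} = (k+2) + (x-k-1)(x+k+4)/2 for x ≥ k+1. Then A satisfies the recurrence p*_x (A_{x+1,k} - A_{x,k}) = q*_x (A_{x,k} - A_{x-1,k}) - 1 for all x ≥ k+1, where p*_x = x/(3(x+2)) and q*_x = (x+3)/(3(x+1)). -/
def A (x k : ℤ) : ℚ :=
  if x = k then 0 else ((k : ℚ) + 2) + ((x : ℚ) - k - 1) * ((x : ℚ) + k + 4) / 2

def pStar (x : ℚ) : ℚ := x / (3 * (x + 2))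
def qStar (x : ℚ) : ℚ := (x + 3) / (3 * (x + 1))

theorem A_recurrence (k x : ℤ) (hk : 0 ≤ k) (hx : k + 1 ≤ x) :
    pStar x * (A (x + 1) k - A x k) = qStar x * (A x k - A (x - 1) k) - 1 := by
  have hx1 : (1 : ℤ) ≤ x := le_trans (by omega) hx
  have hxq : (1 : ℚ) ≤ (x : ℚ) := by exact_mod_cast hx1
  have h1 : ((x : ℚ) + 2) ≠ 0 := by nlinarith
  have h2 : ((x : ℚ) + 1) ≠ 0 := by nlinarith
  have hne : x ≠ k := by omega
  have hne1 : x + 1 ≠ k := by omega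
  rcases eq_or_lt_of_le hx with h | h
  · have hxk : x = k + 1 := h.symm
    have he : x - 1 = k := by omega
    have hq : (x : ℚ) = (k : ℚ) + 1 := by rw [hxk]; push_cast; ring
    simp only [A, pStar, qStar, if_neg hne, if_neg hne1, he, if_pos rfl]
    push_cast
    rw [hq]
    field_simp
    ring
  · have hne2 : x - 1 ≠ k := by omega
    simp only [A, pStar, qStar, if_neg hne, if_neg hne1, if_neg hne2]
    push_cast
    field_simp
    ring
end

section
/- For integers x ≥ k ≥ 0, the solution of the recurrence A_{k,k} = 0, A_{k+1,k} = k+2, and A_{x+1,k} - A_{x,k} = (k+2)·(x+3)(x+2)²(x+1)/((k+1)(k+2)²(k+3)) - ∑_{y=k+1}^{x} 3(x+1)(x+2)²(x+3)/(y(y+1)(y+2)(y+3)) is given in closed form by A_{x,k} = (k+2) + (x-k-1)(x+k+4)/2 for x ≥ k+1. -/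
lemma sum_tele (k : ℕ) : ∀ x : ℕ, k + 1 ≤ x →
    ∑ y ∈ Finset.Icc (k + 1) x,
        (1 : ℚ) / ((y : ℚ) * ((y : ℚ) + 1) * ((y : ℚ) + 2) * ((y : ℚ) + 3))
      = 1 / (3 * ((k : ℚ) + 1) * ((k : ℚ) + 2) * ((k : ℚ) + 3))
        - 1 / (3 * ((x : ℚ) + 1) * ((x : ℚ) + 2) * ((x : ℚ) + 3)) := by
  intro x hx
  induction x, hx using Nat.le_induction with
  | base =>
    rw [Finset.Icc_self, Finset.sum_singleton]
    have h1 : (k : ℚ) + 1 ≠ 0 := by positivity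
    have h2 : (k : ℚ) + 2 ≠ 0 := by positivity
    have h3 : (k : ℚ) + 3 ≠ 0 := by positivity
    have h4 : (k : ℚ) + 4 ≠ 0 := by positivity
    push_cast
    field_simp
    ring
  | succ x hx ih =>
    rw [Finset.sum_Icc_succ_top (by omega), ih]
    have h1 : (x : ℚ) + 1 ≠ 0 := by positivity
    have h2 : (x : ℚ) + 2 ≠ 0 := by positivity
    have h3 : (x : ℚ) + 3 ≠ 0 := by positivity
    have h4 : (x : ℚ) + 4 ≠ 0 := by positivity
    have hk1 : (k : ℚ) + 1 ≠ 0 := by positivity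
    have hk2 : (k : ℚ) + 2 ≠ 0 := by positivity
    have hk3 : (k : ℚ) + 3 ≠ 0 := by positivity
    push_cast
    field_simp
    ring

theorem A_closed_form (k : ℕ) (A : ℕ → ℚ)
    (h0 : A k = 0) (h1 : A (k + 1) = (k : ℚ) + 2)
    (hrec : ∀ x : ℕ, k + 1 ≤ x →
      A (x + 1) - A x
        = ((k : ℚ) + 2) * ((x : ℚ) + 3) * ((x : ℚ) + 2) ^ 2 * ((x : ℚ) + 1)
            / (((k : ℚ) + 1) * ((k : ℚ) + 2) ^ 2 * ((k : ℚ) + 3))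
          - ∑ y ∈ Finset.Icc (k + 1) x,
              3 * ((x : ℚ) + 1) * ((x : ℚ) + 2) ^ 2 * ((x : ℚ) + 3)
                / ((y : ℚ) * ((y : ℚ) + 1) * ((y : ℚ) + 2) * ((y : ℚ) + 3))) :
    ∀ x : ℕ, k + 1 ≤ x →
      A x = ((k : ℚ) + 2) + ((x : ℚ) - k - 1) * ((x : ℚ) + k + 4) / 2 := by
  intro x hx
  induction x, hx using Nat.le_induction with
  | base => rw [h1]; push_cast; ring
  | succ x hx ih =>
    have hstep : A (x + 1) - A x = (x : ℚ) + 2 := by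
      rw [hrec x hx]
      have hsum : ∑ y ∈ Finset.Icc (k + 1) x,
          3 * ((x : ℚ) + 1) * ((x : ℚ) + 2) ^ 2 * ((x : ℚ) + 3)
            / ((y : ℚ) * ((y : ℚ) + 1) * ((y : ℚ) + 2) * ((y : ℚ) + 3))
          = 3 * ((x : ℚ) + 1) * ((x : ℚ) + 2) ^ 2 * ((x : ℚ) + 3) *
            ∑ y ∈ Finset.Icc (k + 1) x,
              (1 : ℚ) / ((y : ℚ) * ((y : ℚ) + 1) * ((y : ℚ) + 2) * ((y : ℚ) + 3)) := by
        rw [Finset.mul_sum]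
        exact Finset.sum_congr rfl fun y _ => by ring
      rw [hsum, sum_tele k x hx]
      have h1 : (x : ℚ) + 1 ≠ 0 := by positivity
      have h2 : (x : ℚ) + 2 ≠ 0 := by positivity
      have h3 : (x : ℚ) + 3 ≠ 0 := by positivity
      have hk1 : (k : ℚ) + 1 ≠ 0 := by positivity
      have hk2 : (k : ℚ) + 2 ≠ 0 := by positivity
      have hk3 : (k : ℚ) + 3 ≠ 0 := by positivity
      field_simp
      ring
    have : A (x + 1) = A x + ((x : ℚ) + 2) := by linarith
    rw [this, ih]
    push_cast
    ring
end

section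
/- Define the Green function H_x(k) for the Markov chain X by H_x(k) = 3(2k+3)/10 if x ≤ k, and H_x(k) = 3 h(k)(2k+3)/(10 h(x)) if x > k, where h(x) = x(x+1)(x+2)(x+3)(2x+3). Then for every x ≥ 2 and k ≥ 2 with x ≠ k, H satisfies the harmonicity relation H_x(k) = p(x,x+1) H_{x+1}(k) + p(x,x) H_x(k) + p(x,x-1) H_{x-1}(k) + [x = k], where p are the transitions p(x,x+1) = (x+4)(2x+5)/(3(x+2)(2x+3)), p(x,x) = x(x+3)/(3(x+1)(x+2)), p(x,x-1) = (x-1)(2x+1)/(3(x+1)(2x+3)). -/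
set_option maxHeartbeats 2000000


/-- Green function of the chain X. -/
def H (x k : ℕ) : ℚ :=
  if x ≤ k then 3 * (2 * (k : ℚ) + 3) / 10
  else 3 * h k * (2 * (k : ℚ) + 3) / (10 * h x)

theorem green_harmonic (x k : ℕ) (hx : 2 ≤ x) (hk : 2 ≤ k) (hxk : x ≠ k) :
    H x k = pUp x * H (x + 1) k + pStay x * H x k + pDown x * H (x - 1) k
      + (if x = k then 1 else 0) := by
  have hq : (2:ℚ) ≤ (x:ℚ) := by exact_mod_cast hx
  have hqk : (2:ℚ) ≤ (k:ℚ) := by exact_mod_cast hk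
  have hcast : ((x - 1 : ℕ) : ℚ) = (x:ℚ) - 1 := by
    have : 1 ≤ x := le_trans (by norm_num) hx
    push_cast [this]; ring
  have h1 : (x:ℚ) + 1 ≠ 0 := by nlinarith
  have h2 : (x:ℚ) + 2 ≠ 0 := by nlinarith
  have h3 : 2 * (x:ℚ) + 3 ≠ 0 := by nlinarith
  have hx0 : (x:ℚ) ≠ 0 := by nlinarith
  have hx3 : (x:ℚ) + 3 ≠ 0 := by nlinarith
  have hk0 : (k:ℚ) ≠ 0 := by nlinarith
  have hhx : h x ≠ 0 := by
    simp only [h]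
    apply mul_ne_zero; apply mul_ne_zero; apply mul_ne_zero; apply mul_ne_zero
    all_goals assumption
  rcases lt_or_gt_of_ne hxk with hlt | hgt
  · have e1 : x ≤ k := le_of_lt hlt
    have e2 : x + 1 ≤ k := hlt
    have e3 : x - 1 ≤ k := le_trans (Nat.sub_le _ _) e1
    simp only [H, e1, e2, e3, if_pos, if_neg (ne_of_lt hlt)]
    simp only [pUp, pStay, pDown]
    field_simp
    ring
  · have e1 : ¬ x ≤ k := not_le.mpr hgt
    have e2 : ¬ x + 1 ≤ k := by omega
    simp only [H, if_neg e1, if_neg e2, if_neg hxk]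
    rcases eq_or_ne x (k + 1) with heq | hne
    · subst heq
      have e3 : k + 1 - 1 ≤ k := by omega
      have hk1 : (k:ℚ) + 1 ≠ 0 := by nlinarith
      have hk2 : (k:ℚ) + 2 ≠ 0 := by nlinarith
      have hk3 : (k:ℚ) + 3 ≠ 0 := by nlinarith
      have hk4 : (k:ℚ) + 4 ≠ 0 := by nlinarith
      have hk5 : 2 * (k:ℚ) + 5 ≠ 0 := by nlinarith
      have hk6 : 2 * (k:ℚ) + 3 ≠ 0 := by nlinarith
      simp only [if_pos e3, pUp, pStay, pDown, h]
      push_cast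
      field_simp
      ring
    · have e3 : ¬ x - 1 ≤ k := by omega
      have hqk3 : (3:ℚ) ≤ (x:ℚ) := by
        have : 3 ≤ x := by omega
        exact_mod_cast this
      have hx4 : (x:ℚ) + 4 ≠ 0 := by nlinarith
      have hx5 : 2 * (x:ℚ) + 5 ≠ 0 := by nlinarith
      have hxm1 : (x:ℚ) - 1 ≠ 0 := by nlinarith
      have hx21 : 2 * (x:ℚ) + 1 ≠ 0 := by nlinarith
      simp only [if_neg e3, pUp, pStay, pDown, hcast]
      push_cast
      have eA : h ((x:ℚ)+1) = ((x:ℚ)+1) * ((x:ℚ)+2) * ((x:ℚ)+3) * ((x:ℚ)+4) * (2*(x:ℚ)+5) := by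
        simp only [h]; ring
      have eB : h ((x:ℚ)-1) = ((x:ℚ)-1) * (x:ℚ) * ((x:ℚ)+1) * ((x:ℚ)+2) * (2*(x:ℚ)+1) := by
        simp only [h]; ring
      have eC : h ((x:ℚ)) = (x:ℚ) * ((x:ℚ)+1) * ((x:ℚ)+2) * ((x:ℚ)+3) * (2*(x:ℚ)+3) := rfl
      rw [eA, eB, eC]
      field_simp
      ring
end
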